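/- Let Y and Z be jointly normal random variables with mean 0, standard deviations \sigma_Y, \sigma_Z > 0 and correlation coefficient \rho with |\rho| < 1. Then the ratio X = Y/Z follows the Cauchy distribution with location parameter \alpha = \rho \sigma_Y / \sigma_Z and scale parameter \beta = (\sigma_Y/\sigma_Z)\sqrt{1 - \rho^2}. -/

import Mathlib

open MeasureTheory ProbabilityTheory Real

open Set Filter
open scoped ENNReal NNReal

namespace CauchyRatioAux

lemma integral_Ioi_mul_exp {b : ℝ} (hb : 0 < b) :
    ∫ r in Ioi (0:ℝ), r * Real.exp (-b * r ^ 2) = (2*b)⁻¹ := by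
  have A : ∀ x : ℝ, HasDerivAt (fun x : ℝ => -(2*b)⁻¹ * Real.exp (-b*x^2))
      (x * Real.exp (-b*x^2)) x := by
    intro x
    convert (((hasDerivAt_pow 2 x).const_mul (-b)).exp.const_mul (-(2*b)⁻¹)) using 1
    · rfl
    · rfl
    field_simp
    ring
  have B : Tendsto (fun y : ℝ => -(2*b)⁻¹ * Real.exp (-b*y^2)) atTop (nhds (-(2*b)⁻¹ * 0)) := by
    refine Tendsto.const_mul _ ?_
    refine Real.tendsto_exp_atBot.comp ?_
    exact (tendsto_pow_atTop two_ne_zero).const_mul_atTop_of_neg (neg_lt_zero.2 hb)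
  have := integral_Ioi_of_hasDerivAt_of_tendsto' (a := 0)
    (fun x _ => A x) (integrable_mul_exp_neg_mul_sq hb).integrableOn B
  rw [this]
  simp [mul_comm]

lemma integral_abs_mul_exp {b : ℝ} (hb : 0 < b) :
    ∫ z : ℝ, |z| * Real.exp (-b * z ^ 2) = b⁻¹ := by
  have h : ∀ z : ℝ, |z| * Real.exp (-b * z ^ 2) = (fun y : ℝ => y * Real.exp (-b * y ^ 2)) |z| := by
    intro z; simp [sq_abs]
  calc ∫ z : ℝ, |z| * Real.exp (-b * z ^ 2)
      = ∫ z : ℝ, (fun y : ℝ => y * Real.exp (-b * y ^ 2)) |z| := by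
        congr 1; funext z; exact h z
    _ = 2 * ∫ z in Ioi (0:ℝ), z * Real.exp (-b * z ^ 2) := integral_comp_abs (f := fun y : ℝ => y * Real.exp (-b * y ^ 2))
    _ = b⁻¹ := by rw [integral_Ioi_mul_exp hb]; field_simp

lemma integrable_abs_mul_exp {b : ℝ} (hb : 0 < b) :
    Integrable (fun z : ℝ => |z| * Real.exp (-b * z ^ 2)) := by
  have := (integrable_mul_exp_neg_mul_sq hb).abs
  refine this.congr ?_
  filter_upwards with z
  rw [abs_mul, abs_of_pos (Real.exp_pos _)]

end CauchyRatioAux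

namespace CauchyRatioAux
open ProbabilityTheory

lemma gpdf_pointwise (x z : ℝ) :
    gaussianPDF 0 1 z * (ENNReal.ofReal |z| * gaussianPDF 0 1 (z * x)) =
      ENNReal.ofReal ((2*π)⁻¹ * (|z| * Real.exp (-((1+x^2)/2) * z ^ 2))) := by
  rw [gaussianPDF, gaussianPDF, ← ENNReal.ofReal_mul (abs_nonneg _),
    ← ENNReal.ofReal_mul (gaussianPDFReal_nonneg _ _ _)]
  congr 1
  simp only [gaussianPDFReal, NNReal.coe_one, mul_one, sub_zero]
  have h2π : Real.sqrt (2*π) * Real.sqrt (2*π) = 2*π := Real.mul_self_sqrt (by positivity)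
  have hexp : Real.exp (-z^2/2) * Real.exp (-(z*x)^2/2) = Real.exp (-((1+x^2)/2) * z ^ 2) := by
    rw [← Real.exp_add]; congr 1; ring
  have hinv : (Real.sqrt (2*π))⁻¹ * (Real.sqrt (2*π))⁻¹ = (2*π)⁻¹ := by
    rw [← mul_inv, h2π]
  calc (Real.sqrt (2*π))⁻¹ * Real.exp (-z^2/2) * (|z| * ((Real.sqrt (2*π))⁻¹ * Real.exp (-(z*x)^2/2)))
      = ((Real.sqrt (2*π))⁻¹ * (Real.sqrt (2*π))⁻¹) * (Real.exp (-z^2/2) * Real.exp (-(z*x)^2/2)) * |z| := by ring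
    _ = (2*π)⁻¹ * (|z| * Real.exp (-((1+x^2)/2) * z ^ 2)) := by rw [hexp, hinv]; ring

lemma inner_lintegral (x : ℝ) :
    ∫⁻ z : ℝ, gaussianPDF 0 1 z * (ENNReal.ofReal |z| * gaussianPDF 0 1 (z * x)) ∂volume =
      ENNReal.ofReal (1 / (π * (1 + x ^ 2))) := by
  have hb : 0 < (1+x^2)/2 := by positivity
  simp_rw [gpdf_pointwise x]
  rw [← ofReal_integral_eq_lintegral_ofReal
      (((integrable_abs_mul_exp hb).const_mul _))
      (Filter.Eventually.of_forall fun z => by positivity)]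
  congr 1
  rw [MeasureTheory.integral_const_mul, integral_abs_mul_exp hb]
  have hx : (0:ℝ) < 1 + x^2 := by positivity
  field_simp

end CauchyRatioAux

namespace CauchyRatioAux

lemma section_measure {z : ℝ} (hz : z ≠ 0) {s : Set ℝ} (hs : MeasurableSet s) :
    gaussianReal 0 1 {u : ℝ | u / z ∈ s} =
      ∫⁻ x in s, ENNReal.ofReal |z| * gaussianPDF 0 1 (z * x) ∂volume := by
  have hA : MeasurableSet {u : ℝ | u / z ∈ s} := (measurable_id.div_const z) hs
  rw [gaussianReal_apply _ one_ne_zero, ← lintegral_indicator hA _]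
  have key : ∫⁻ u, {u : ℝ | u / z ∈ s}.indicator (gaussianPDF 0 1) u ∂volume
      = ENNReal.ofReal |z| * ∫⁻ x, {u : ℝ | u / z ∈ s}.indicator (gaussianPDF 0 1) (z * x) ∂volume := by
    have hmeas : Measurable ({u : ℝ | u / z ∈ s}.indicator (gaussianPDF 0 1)) :=
      (measurable_gaussianPDF 0 1).indicator hA
    have hmap : Measure.map (z * ·) volume = ENNReal.ofReal |z⁻¹| • volume :=
      Real.map_volume_mul_left hz
    have h1 : ∫⁻ x, {u : ℝ | u / z ∈ s}.indicator (gaussianPDF 0 1) (z * x) ∂volume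
        = ∫⁻ u, {u : ℝ | u / z ∈ s}.indicator (gaussianPDF 0 1) u ∂(Measure.map (z * ·) volume) :=
      (lintegral_map hmeas (measurable_const_mul z)).symm
    rw [h1, hmap, lintegral_smul_measure, smul_eq_mul, ← mul_assoc, ← ENNReal.ofReal_mul (abs_nonneg _),
      ← abs_mul, mul_inv_cancel₀ hz]
    simp
  rw [key]
  have h2 : ∀ x : ℝ, {u : ℝ | u / z ∈ s}.indicator (gaussianPDF 0 1) (z * x)
      = s.indicator (fun x => gaussianPDF 0 1 (z * x)) x := by
    intro x
    have hzx : z * x / z = x := by field_simp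
    have hmem : (z * x ∈ {u : ℝ | u / z ∈ s}) ↔ x ∈ s := by
      simp [Set.mem_setOf_eq, hzx]
    by_cases hx : x ∈ s
    · rw [Set.indicator_of_mem (hmem.mpr hx), Set.indicator_of_mem hx]
    · rw [Set.indicator_of_notMem (fun h => hx (hmem.mp h)), Set.indicator_of_notMem hx]
  simp_rw [h2]
  have hm : Measurable fun a : ℝ => gaussianPDF 0 1 (z * a) :=
    (measurable_gaussianPDF 0 1).comp (measurable_const_mul z)
  rw [lintegral_indicator hs _, ← lintegral_const_mul _ hm]

end CauchyRatioAux

namespace CauchyRatioAux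

lemma ratio_cauchy :
    Measure.map (fun p : ℝ × ℝ => p.2 / p.1) ((gaussianReal 0 1).prod (gaussianReal 0 1)) =
      volume.withDensity (fun x => ENNReal.ofReal (1 / (π * (1 + x ^ 2)))) := by
  have hr : Measurable fun p : ℝ × ℝ => p.2 / p.1 := measurable_snd.div measurable_fst
  ext s hs
  rw [Measure.map_apply hr hs, withDensity_apply _ hs, Measure.prod_apply (hr hs)]
  set F : ℝ → ℝ≥0∞ := fun z => gaussianReal 0 1 (Prod.mk z ⁻¹' ((fun p : ℝ × ℝ => p.2 / p.1) ⁻¹' s)) with hF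
  have hFmeas : Measurable F := measurable_measure_prodMk_left (hr hs)
  have hμ : gaussianReal 0 1 = volume.withDensity (gaussianPDF 0 1) :=
    gaussianReal_of_var_ne_zero _ one_ne_zero
  have step1 : ∫⁻ z, F z ∂(gaussianReal 0 1) = ∫⁻ z, gaussianPDF 0 1 z * F z ∂volume := by
    rw [hμ, lintegral_withDensity_eq_lintegral_mul volume (measurable_gaussianPDF 0 1) hFmeas]
    rfl
  rw [step1]
  -- replace F z by explicit set-lintegral for a.e. z
  have h0 : ∀ᵐ z : ℝ ∂volume, z ≠ 0 := by
    rw [ae_iff]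
    simp
  set f : ℝ → ℝ → ℝ≥0∞ := fun z x =>
    (gaussianPDF 0 1 z * (ENNReal.ofReal |z| * gaussianPDF 0 1 (z * x))) *
      s.indicator (fun _ => (1:ℝ≥0∞)) x with hf
  have hstep2 : ∫⁻ z, gaussianPDF 0 1 z * F z ∂volume = ∫⁻ z, ∫⁻ x, f z x ∂volume ∂volume := by
    refine lintegral_congr_ae ?_
    filter_upwards [h0] with z hz
    have hsec : Prod.mk z ⁻¹' ((fun p : ℝ × ℝ => p.2 / p.1) ⁻¹' s) = {u : ℝ | u / z ∈ s} := rfl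
    rw [hF]
    simp only [hsec]
    rw [section_measure hz hs]
    have hm : Measurable fun x : ℝ => ENNReal.ofReal |z| * gaussianPDF 0 1 (z * x) :=
      (measurable_const.mul ((measurable_gaussianPDF 0 1).comp (measurable_const_mul z)))
    rw [← lintegral_indicator hs _, ← lintegral_const_mul _ (hm.indicator hs)]
    refine lintegral_congr fun x => ?_
    by_cases hx : x ∈ s
    · simp [hf, Set.indicator_of_mem hx, mul_assoc]
    · simp [hf, Set.indicator_of_notMem hx]
  rw [hstep2]
  have hfmeas : Measurable (Function.uncurry f) := by
    have h1 : Measurable fun p : ℝ × ℝ => gaussianPDF 0 1 p.1 :=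
      (measurable_gaussianPDF 0 1).comp measurable_fst
    have h2 : Measurable fun p : ℝ × ℝ => ENNReal.ofReal |p.1| :=
      measurable_fst.abs.ennreal_ofReal
    have h3 : Measurable fun p : ℝ × ℝ => gaussianPDF 0 1 (p.1 * p.2) :=
      (measurable_gaussianPDF 0 1).comp (measurable_fst.mul measurable_snd)
    have h4 : Measurable fun p : ℝ × ℝ => s.indicator (fun _ => (1:ℝ≥0∞)) p.2 :=
      (measurable_const.indicator hs).comp measurable_snd
    exact ((h1.mul (h2.mul h3)).mul h4)
  rw [lintegral_lintegral_swap hfmeas.aemeasurable]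
  have hinner : ∀ x : ℝ, ∫⁻ z, f z x ∂volume =
      ENNReal.ofReal (1 / (π * (1 + x ^ 2))) * s.indicator (fun _ => (1:ℝ≥0∞)) x := by
    intro x
    have hG : Measurable fun z : ℝ =>
        gaussianPDF 0 1 z * (ENNReal.ofReal |z| * gaussianPDF 0 1 (z * x)) :=
      (measurable_gaussianPDF 0 1).mul
        ((measurable_abs.ennreal_ofReal).mul
          ((measurable_gaussianPDF 0 1).comp (measurable_mul_const x)))
    rw [hf]
    simp only
    rw [lintegral_mul_const _ hG, inner_lintegral x]
  simp_rw [hinner]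
  have hind : ∀ x : ℝ, ENNReal.ofReal (1 / (π * (1 + x ^ 2))) * s.indicator (fun _ => (1:ℝ≥0∞)) x
      = s.indicator (fun x => ENNReal.ofReal (1 / (π * (1 + x ^ 2)))) x := by
    intro x
    by_cases hx : x ∈ s
    · simp [Set.indicator_of_mem hx]
    · simp [Set.indicator_of_notMem hx]
  simp_rw [hind]
  rw [lintegral_indicator hs _]

end CauchyRatioAux

namespace CauchyRatioAux

lemma map_withDensity_comp {α β : Type*} [MeasurableSpace α] [MeasurableSpace β]
    (μ : Measure α) {f : α → β} (hf : Measurable f) {g : β → ℝ≥0∞} (hg : Measurable g) :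
    Measure.map f (μ.withDensity (fun x => g (f x))) = (Measure.map f μ).withDensity g := by
  ext s hs
  rw [Measure.map_apply hf hs, withDensity_apply _ (hf hs), withDensity_apply _ hs,
    setLIntegral_map hs hg hf]

lemma smul_withDensity {α : Type*} [MeasurableSpace α] (μ : Measure α) (c : ℝ≥0∞)
    (f : α → ℝ≥0∞) : (c • μ).withDensity f = c • μ.withDensity f := by
  ext s hs
  rw [Measure.smul_apply, withDensity_apply _ hs, withDensity_apply _ hs,
    Measure.restrict_smul, lintegral_smul_measure]

lemma gauss_prod :
    (gaussianReal 0 1).prod (gaussianReal 0 1) =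
      (volume.prod volume).withDensity (fun p => gaussianPDF 0 1 p.1 * gaussianPDF 0 1 p.2) := by
  have hμ : gaussianReal 0 1 = volume.withDensity (gaussianPDF 0 1) :=
    gaussianReal_of_var_ne_zero _ one_ne_zero
  have hG : Measurable fun p : ℝ × ℝ => gaussianPDF 0 1 p.1 * gaussianPDF 0 1 p.2 :=
    ((measurable_gaussianPDF 0 1).comp measurable_fst).mul
      ((measurable_gaussianPDF 0 1).comp measurable_snd)
  ext s hs
  rw [Measure.prod_apply hs, withDensity_apply _ hs]
  set F : ℝ → ℝ≥0∞ := fun z => gaussianReal 0 1 (Prod.mk z ⁻¹' s) with hF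
  have hFmeas : Measurable F := measurable_measure_prodMk_left hs
  have step1 : ∫⁻ z, F z ∂(gaussianReal 0 1) = ∫⁻ z, gaussianPDF 0 1 z * F z ∂volume := by
    rw [hμ, lintegral_withDensity_eq_lintegral_mul volume (measurable_gaussianPDF 0 1) hFmeas]
    rfl
  rw [step1]
  have hRHS : ∫⁻ p in s, gaussianPDF 0 1 p.1 * gaussianPDF 0 1 p.2 ∂(volume.prod volume)
      = ∫⁻ z, ∫⁻ y, s.indicator (fun p : ℝ × ℝ => gaussianPDF 0 1 p.1 * gaussianPDF 0 1 p.2) (z, y) ∂volume ∂volume := by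
    rw [← lintegral_indicator hs _, lintegral_prod _ (hG.indicator hs).aemeasurable]
  rw [hRHS]
  refine lintegral_congr fun z => ?_
  have h1 : ∀ y : ℝ, s.indicator (fun p : ℝ × ℝ => gaussianPDF 0 1 p.1 * gaussianPDF 0 1 p.2) (z, y)
      = (Prod.mk z ⁻¹' s).indicator (fun y => gaussianPDF 0 1 z * gaussianPDF 0 1 y) y := by
    intro y
    by_cases hy : (z, y) ∈ s <;> simp [Set.indicator, hy, Set.mem_preimage]
  simp_rw [h1]
  rw [lintegral_indicator (measurable_prodMk_left hs) _,
    lintegral_const_mul _ (measurable_gaussianPDF 0 1), hF]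
  simp only
  rw [gaussianReal_apply _ one_ne_zero]

end CauchyRatioAux

namespace CauchyRatioAux

noncomputable def rotMap (ρ t : ℝ) : (ℝ × ℝ) →ₗ[ℝ] (ℝ × ℝ) where
  toFun := fun p => (ρ * p.1 + t * p.2, t * p.1 - ρ * p.2)
  map_add' := by intro p q; simp [Prod.ext_iff]; constructor <;> ring
  map_smul' := by intro c p; simp [Prod.ext_iff, Prod.smul_fst, Prod.smul_snd, smul_eq_mul]; constructor <;> ring

lemma rotMap_det (ρ t : ℝ) : LinearMap.det (rotMap ρ t) = -(ρ^2 + t^2) := by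
  rw [← LinearMap.det_toMatrix (Module.Basis.finTwoProd ℝ), Matrix.det_fin_two]
  simp [LinearMap.toMatrix_apply, rotMap, Module.Basis.finTwoProd]
  ring

lemma map_rot_volume (ρ t : ℝ) (h : ρ^2 + t^2 = 1) :
    Measure.map (fun p : ℝ × ℝ => (ρ * p.1 + t * p.2, t * p.1 - ρ * p.2)) (volume.prod volume)
      = volume.prod volume := by
  haveI : (volume.prod volume : Measure (ℝ × ℝ)).IsAddHaarMeasure :=
    Measure.prod.instIsAddHaarMeasure _ _
  have hdet : LinearMap.det (rotMap ρ t) ≠ 0 := by rw [rotMap_det, h]; norm_num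
  have := Measure.map_linearMap_addHaar_eq_smul_addHaar (volume.prod volume) hdet
  rw [rotMap_det, h] at this
  have hfun : ⇑(rotMap ρ t) = fun p : ℝ × ℝ => (ρ * p.1 + t * p.2, t * p.1 - ρ * p.2) := rfl
  rw [hfun] at this
  rw [this]
  norm_num

lemma rot_gauss (ρ t : ℝ) (h : ρ^2 + t^2 = 1) :
    Measure.map (fun p : ℝ × ℝ => (ρ * p.1 + t * p.2, t * p.1 - ρ * p.2))
      ((gaussianReal 0 1).prod (gaussianReal 0 1)) = (gaussianReal 0 1).prod (gaussianReal 0 1) := by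
  set T : ℝ × ℝ → ℝ × ℝ := fun p => (ρ * p.1 + t * p.2, t * p.1 - ρ * p.2) with hT
  have hTm : Measurable T := by
    apply Measurable.prod
    · exact (measurable_fst.const_mul ρ).add (measurable_snd.const_mul t)
    · exact (measurable_fst.const_mul t).sub (measurable_snd.const_mul ρ)
  set G : ℝ × ℝ → ℝ≥0∞ := fun p => gaussianPDF 0 1 p.1 * gaussianPDF 0 1 p.2 with hG
  have hGm : Measurable G :=
    ((measurable_gaussianPDF 0 1).comp measurable_fst).mul
      ((measurable_gaussianPDF 0 1).comp measurable_snd)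
  have hGT : ∀ p : ℝ × ℝ, G (T p) = G p := by
    intro ⟨x, y⟩
    simp only [hG, hT, gaussianPDF]
    rw [← ENNReal.ofReal_mul (gaussianPDFReal_nonneg _ _ _),
      ← ENNReal.ofReal_mul (gaussianPDFReal_nonneg _ _ _)]
    congr 1
    simp only [gaussianPDFReal, NNReal.coe_one, mul_one, sub_zero]
    have : Real.exp (-(ρ * x + t * y)^2/2) * Real.exp (-(t * x - ρ * y)^2/2)
        = Real.exp (-x^2/2) * Real.exp (-y^2/2) := by
      rw [← Real.exp_add, ← Real.exp_add]
      congr 1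
      have : (ρ * x + t * y)^2 + (t * x - ρ * y)^2 = (ρ^2 + t^2) * (x^2 + y^2) := by ring
      nlinarith [this]
    calc (Real.sqrt (2*π))⁻¹ * Real.exp (-(ρ * x + t * y)^2/2) * ((Real.sqrt (2*π))⁻¹ * Real.exp (-(t * x - ρ * y)^2/2))
        = (Real.sqrt (2*π))⁻¹ * (Real.sqrt (2*π))⁻¹ * (Real.exp (-(ρ * x + t * y)^2/2) * Real.exp (-(t * x - ρ * y)^2/2)) := by ring
      _ = (Real.sqrt (2*π))⁻¹ * (Real.sqrt (2*π))⁻¹ * (Real.exp (-x^2/2) * Real.exp (-y^2/2)) := by rw [this]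
      _ = (Real.sqrt (2*π))⁻¹ * Real.exp (-x^2/2) * ((Real.sqrt (2*π))⁻¹ * Real.exp (-y^2/2)) := by ring
  have hfun : (fun p : ℝ × ℝ => G (T p)) = G := funext hGT
  rw [gauss_prod, ← hG, ← hfun, map_withDensity_comp _ hTm hGm, map_rot_volume ρ t h, hG]
  exact congrArg _ (funext fun p => (hGT p).symm)

end CauchyRatioAux

namespace CauchyRatioAux

lemma map_affine_volume {a b : ℝ} (hb : 0 < b) :
    Measure.map (fun x : ℝ => a + b * x) volume = ENNReal.ofReal b⁻¹ • volume := by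
  have hcomp : (fun x : ℝ => a + b * x) = (fun y : ℝ => a + y) ∘ (fun x : ℝ => b * x) := rfl
  rw [hcomp, ← Measure.map_map (measurable_const_add a) (measurable_const_mul b),
    Real.map_volume_mul_left hb.ne', Measure.map_smul, map_add_left_eq_self volume a,
    abs_of_pos (inv_pos.mpr hb)]

lemma map_affine_withDensity {a b : ℝ} (hb : 0 < b) {c : ℝ → ℝ≥0∞} (hc : Measurable c) :
    Measure.map (fun x : ℝ => a + b * x) (volume.withDensity c) =
      volume.withDensity (fun y => ENNReal.ofReal b⁻¹ * c ((y - a) / b)) := by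
  set d : ℝ → ℝ≥0∞ := fun y => ENNReal.ofReal b⁻¹ * c ((y - a) / b) with hd
  have hdm : Measurable d := by
    apply measurable_const.mul
    exact hc.comp ((measurable_id.sub_const a).div_const b)
  have hem : Measurable (fun x : ℝ => a + b * x) := measurable_const.add (measurable_const_mul b)
  have hde : Measurable fun x : ℝ => d (a + b * x) := hdm.comp hem
  have h1 : (fun x : ℝ => ENNReal.ofReal b * d (a + b * x)) = c := by
    funext x
    have hx : (a + b * x - a) / b = x := by field_simp; ring
    rw [hd]
    simp only [hx]
    rw [← mul_assoc, ← ENNReal.ofReal_mul hb.le, mul_inv_cancel₀ hb.ne', ENNReal.ofReal_one, one_mul]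
  calc Measure.map (fun x : ℝ => a + b * x) (volume.withDensity c)
      = Measure.map (fun x : ℝ => a + b * x)
          (volume.withDensity (fun x => ENNReal.ofReal b * d (a + b * x))) := by rw [h1]
    _ = Measure.map (fun x : ℝ => a + b * x)
          (ENNReal.ofReal b • volume.withDensity (fun x => d (a + b * x))) := by
          rw [← withDensity_smul _ hde]
          rfl
    _ = ENNReal.ofReal b • Measure.map (fun x : ℝ => a + b * x)
          (volume.withDensity (fun x => d (a + b * x))) := Measure.map_smul _ _ _
    _ = ENNReal.ofReal b • (Measure.map (fun x : ℝ => a + b * x) volume).withDensity d := by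
          rw [map_withDensity_comp _ hem hdm]
    _ = ENNReal.ofReal b • (ENNReal.ofReal b⁻¹ • volume).withDensity d := by
          rw [map_affine_volume hb]
    _ = ENNReal.ofReal b • ENNReal.ofReal b⁻¹ • volume.withDensity d := by
          rw [smul_withDensity]
    _ = volume.withDensity d := by
          rw [smul_smul, ← ENNReal.ofReal_mul hb.le, mul_inv_cancel₀ hb.ne', ENNReal.ofReal_one, one_smul]

end CauchyRatioAux


open CauchyRatioAux

set_option maxHeartbeats 1000000

/-- Let `(Y, Z)` be jointly normal, centered, with standard deviations `σY, σZ > 0`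
and correlation `ρ` with `|ρ| < 1` (realized via independent standard normals
`W₁, W₂` as `Y = σY W₁` and `Z = σZ (ρ W₁ + √(1 - ρ²) W₂)`). Then the ratio
`X = Y / Z` follows the Cauchy distribution with location `α = ρ σY / σZ` and
scale `β = (σY / σZ) √(1 - ρ²)`. -/
theorem ratio_of_correlated_normals_cauchy
    {Ω : Type*} [MeasureSpace Ω] [IsProbabilityMeasure (ℙ : Measure Ω)]
    (σY σZ ρ : ℝ) (hσY : 0 < σY) (hσZ : 0 < σZ) (hρ : |ρ| < 1)
    (W₁ W₂ Y Z : Ω → ℝ) (hW₁ : Measurable W₁) (hW₂ : Measurable W₂)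
    (hW₁law : Measure.map W₁ ℙ = gaussianReal 0 1)
    (hW₂law : Measure.map W₂ ℙ = gaussianReal 0 1)
    (hindep : IndepFun W₁ W₂ ℙ)
    (hY : Y = fun ω => σY * W₁ ω)
    (hZ : Z = fun ω => σZ * (ρ * W₁ ω + Real.sqrt (1 - ρ ^ 2) * W₂ ω)) :
    Measure.map (fun ω => Y ω / Z ω) ℙ =
      volume.withDensity (fun x =>
        ENNReal.ofReal (1 / ((σY / σZ * Real.sqrt (1 - ρ ^ 2)) * π *
          (1 + ((x - ρ * σY / σZ) / (σY / σZ * Real.sqrt (1 - ρ ^ 2))) ^ 2)))) := by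
  set t : ℝ := Real.sqrt (1 - ρ ^ 2) with htdef
  have hρ2 : ρ ^ 2 < 1 := by
    have := abs_lt.mp hρ
    nlinarith [this.1, this.2]
  have ht : 0 < t := Real.sqrt_pos.mpr (by linarith)
  have ht2 : t ^ 2 = 1 - ρ ^ 2 := Real.sq_sqrt (by linarith)
  have hρt : ρ ^ 2 + t ^ 2 = 1 := by rw [ht2]; ring
  -- joint law of (W₁, W₂)
  have hpairm : Measurable fun ω => (W₁ ω, W₂ ω) := hW₁.prodMk hW₂
  have hpair : Measure.map (fun ω => (W₁ ω, W₂ ω)) ℙ = (gaussianReal 0 1).prod (gaussianReal 0 1) := by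
    have h := (indepFun_iff_map_prod_eq_prod_map_map hW₁.aemeasurable hW₂.aemeasurable).mp hindep
    rw [h, hW₁law, hW₂law]
  -- rotated pair
  set Z' : Ω → ℝ := fun ω => ρ * W₁ ω + t * W₂ ω with hZ'def
  set U : Ω → ℝ := fun ω => t * W₁ ω - ρ * W₂ ω with hUdef
  have hZ'm : Measurable Z' := (hW₁.const_mul ρ).add (hW₂.const_mul t)
  have hUm : Measurable U := (hW₁.const_mul t).sub (hW₂.const_mul ρ)
  set T : ℝ × ℝ → ℝ × ℝ := fun p => (ρ * p.1 + t * p.2, t * p.1 - ρ * p.2) with hT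
  have hTm : Measurable T := by
    apply Measurable.prod
    · exact (measurable_fst.const_mul ρ).add (measurable_snd.const_mul t)
    · exact (measurable_fst.const_mul t).sub (measurable_snd.const_mul ρ)
  have hZU : Measure.map (fun ω => (Z' ω, U ω)) ℙ = (gaussianReal 0 1).prod (gaussianReal 0 1) := by
    have hcomp : (fun ω => (Z' ω, U ω)) = T ∘ (fun ω => (W₁ ω, W₂ ω)) := rfl
    rw [hcomp, ← Measure.map_map hTm hpairm, hpair, hT, rot_gauss ρ t hρt]
  -- law of U / Z'
  have hrm : Measurable fun p : ℝ × ℝ => p.2 / p.1 := measurable_snd.div measurable_fst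
  have hRm : Measurable fun ω => U ω / Z' ω := hUm.div hZ'm
  have hRlaw : Measure.map (fun ω => U ω / Z' ω) ℙ =
      volume.withDensity (fun x => ENNReal.ofReal (1 / (π * (1 + x ^ 2)))) := by
    have hcomp : (fun ω => U ω / Z' ω) = (fun p : ℝ × ℝ => p.2 / p.1) ∘ (fun ω => (Z' ω, U ω)) := rfl
    rw [hcomp, ← Measure.map_map hrm (hZ'm.prodMk hUm), hZU, ratio_cauchy]
  -- Z' is a.e. nonzero
  have hZ'ne : ∀ᵐ ω ∂(ℙ : Measure Ω), Z' ω ≠ 0 := by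
    have hset : MeasurableSet (({0} : Set ℝ) ×ˢ (Set.univ : Set ℝ)) :=
      (measurableSet_singleton 0).prod MeasurableSet.univ
    have : (ℙ : Measure Ω) ((fun ω => (Z' ω, U ω)) ⁻¹' ({0} ×ˢ Set.univ)) = 0 := by
      rw [← Measure.map_apply (hZ'm.prodMk hUm) hset, hZU, Measure.prod_prod]
      have h0 : gaussianReal 0 1 ({0} : Set ℝ) = 0 :=
        gaussianReal_absolutelyContinuous _ one_ne_zero (measure_singleton 0)
      rw [h0, zero_mul]
    rw [ae_iff]
    convert this using 2
    ext ω
    simp [Set.mem_prod, eq_comm]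
  -- a.e. identity  Y/Z = a + b * (U/Z')
  set aa : ℝ := ρ * σY / σZ with haa
  set bb : ℝ := σY / σZ * t with hbb
  have hbbpos : 0 < bb := by positivity
  have hae : (fun ω => Y ω / Z ω) =ᵐ[(ℙ : Measure Ω)] fun ω => aa + bb * (U ω / Z' ω) := by
    filter_upwards [hZ'ne] with ω hz
    have hz' : ρ * W₁ ω + t * W₂ ω ≠ 0 := hz
    rw [hY, hZ]
    simp only [hZ'def, hUdef, haa, hbb]
    have hz'' : W₁ ω * ρ + t * W₂ ω ≠ 0 := by rwa [mul_comm (W₁ ω) ρ]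
    field_simp
    linear_combination (-(W₁ ω)) * hρt
  rw [Measure.map_congr hae]
  have hafm : Measurable fun x : ℝ => aa + bb * x := measurable_const.add (measurable_const_mul bb)
  have hcomp : (fun ω => aa + bb * (U ω / Z' ω)) = (fun x => aa + bb * x) ∘ (fun ω => U ω / Z' ω) := rfl
  have hcm : Measurable fun x : ℝ => ENNReal.ofReal (1 / (π * (1 + x ^ 2))) :=
    (measurable_const.div (((measurable_id.pow_const 2).const_add 1).const_mul π)).ennreal_ofReal
  rw [hcomp, ← Measure.map_map hafm hRm, hRlaw, map_affine_withDensity hbbpos hcm]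
  congr 1
  funext y
  rw [← ENNReal.ofReal_mul (by positivity)]
  congr 1
  rw [haa, hbb]
  rw [one_div, one_div, ← mul_inv]
  congr 1
  ring
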